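/- arXiv:1404.6711 — 2 statements merged into one kernel-verified Lean document; each statement's English description precedes it below -/
import Mathlib

section
/- Let R be a commutative noetherian ring and let 𝒮 be a class of R-modules. If 𝒮 satisfies the C_{(x)} condition for every principal ideal (x) of R, then 𝒮 satisfies the C_𝔞 condition for every ideal 𝔞 of R. -/
universe u

open Submodule

variable {R : Type u} [CommRing R]

/-- `Γ_a(M)`, the `a`-torsion submodule of `M`: the set of elements annihilated by
some power of the ideal `a`. -/
def torsionGamma (a : Ideal R) (M : Type u) [AddCommGroup M] [Module R M] :
    Submodule R M :=
  ⨆ n : ℕ, Submodule.torsionBySet R M ((a ^ n : Ideal R) : Set R)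

/-- The class `S` satisfies the condition `C_a` on the module `M`:
if `Γ_a(M) = M` and `(0 :_M a) ∈ S` then `M ∈ S`. -/
def CCondOn (S : ModuleCat.{u} R → Prop) (a : Ideal R) (M : ModuleCat.{u} R) : Prop :=
  torsionGamma a M = ⊤ →
    S (ModuleCat.of R (Submodule.torsionBySet R M (a : Set R))) → S M

/-- The class `S` satisfies the condition `C_a` (on every `R`-module). -/
def CCond (S : ModuleCat.{u} R → Prop) (a : Ideal R) : Prop :=
  ∀ M : ModuleCat.{u} R, CCondOn S a M

/-- The class `S` is closed under isomorphisms of `R`-modules. -/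
def IsoClosed (S : ModuleCat.{u} R → Prop) : Prop :=
  ∀ ⦃M N : ModuleCat.{u} R⦄, (M ≃ₗ[R] N) → S M → S N

/-- `S` is a Serre subcategory of the category of `R`-modules: it is closed under
isomorphisms, contains the zero module, and is closed under submodules, quotient modules
and extensions. -/
structure IsSerreClass (S : ModuleCat.{u} R → Prop) : Prop where
  iso : IsoClosed S
  zero : ∀ M : ModuleCat.{u} R, Subsingleton M → S M
  subobj : ∀ (M : ModuleCat.{u} R) (N : Submodule R M), S M → S (ModuleCat.of R N)
  quot : ∀ (M : ModuleCat.{u} R) (N : Submodule R M), S M → S (ModuleCat.of R (M ⧸ N))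
  extension : ∀ (M : ModuleCat.{u} R) (N : Submodule R M),
    S (ModuleCat.of R N) → S (ModuleCat.of R (M ⧸ N)) → S M

lemma torsionGamma_antitone {a b : Ideal R} (hba : b ≤ a) (M : Type u) [AddCommGroup M]
    [Module R M] : torsionGamma a M ≤ torsionGamma b M := by
  refine iSup_mono fun n => ?_
  exact Submodule.torsionBySet_le_torsionBySet_of_subset
    (SetLike.coe_subset_coe.mpr (Ideal.pow_right_mono hba n))

lemma mem_torsionGamma_iff {a : Ideal R} {M : Type u} [AddCommGroup M] [Module R M] {m : M} :
    m ∈ torsionGamma a M ↔ ∃ n : ℕ, ∀ r ∈ a ^ n, r • m = 0 := by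
  have hdir : Directed (· ≤ ·)
      (fun n : ℕ => Submodule.torsionBySet R M ((a ^ n : Ideal R) : Set R)) := by
    intro i j
    refine ⟨max i j, ?_, ?_⟩ <;>
      exact Submodule.torsionBySet_le_torsionBySet_of_subset
        (Ideal.pow_le_pow_right (by omega))
  rw [torsionGamma, Submodule.mem_iSup_of_directed _ hdir]
  constructor
  · rintro ⟨n, hn⟩
    exact ⟨n, fun r hr => (Submodule.mem_torsionBySet_iff _ _).mp hn ⟨r, hr⟩⟩
  · rintro ⟨n, hn⟩
    exact ⟨n, (Submodule.mem_torsionBySet_iff _ _).mpr fun r => hn r r.2⟩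

lemma ccond_sup_step (S : ModuleCat.{u} R → Prop) (hiso : IsoClosed S)
    {x : R} {b : Ideal R} (hx : CCond S (Ideal.span {x})) (hb : CCond S b) :
    CCond S (Ideal.span {x} ⊔ b) := by
  intro M hGam hS
  set a : Ideal R := Ideal.span {x} ⊔ b with ha
  set L : Submodule R M := Submodule.torsionBySet R M ((Ideal.span {x} : Ideal R) : Set R)
    with hLdef
  -- torsionBySet M a ≤ L
  have hle : Submodule.torsionBySet R M (a : Set R) ≤ L :=
    Submodule.torsionBySet_le_torsionBySet_of_subset
      (SetLike.coe_subset_coe.mpr le_sup_left)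
  -- torsionBySet R L b = comap L.subtype (torsionBySet R M a)
  have heq : Submodule.torsionBySet R (↥L) ((b : Ideal R) : Set R)
      = Submodule.comap L.subtype (Submodule.torsionBySet R M (a : Set R)) := by
    ext ⟨m, hm⟩
    simp only [Submodule.mem_comap, Submodule.mem_torsionBySet_iff, Submodule.subtype_apply]
    constructor
    · rintro hbm ⟨r, hr⟩
      obtain ⟨y, hy, z, hz, rfl⟩ := Submodule.mem_sup.mp hr
      have h1 : y • m = 0 := (Submodule.mem_torsionBySet_iff _ _).mp hm ⟨y, hy⟩
      have h2 : z • (⟨m, hm⟩ : ↥L) = 0 := hbm ⟨z, hz⟩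
      have h2' : z • m = 0 := congrArg Subtype.val h2
      show (y + z) • m = 0
      rw [add_smul, h1, h2', add_zero]
    · rintro ham ⟨r, hr⟩
      have h0 : r • m = 0 := ham ⟨r, le_sup_right (a := Ideal.span {x}) hr⟩
      exact Subtype.ext h0
  have hSL : S (ModuleCat.of R ↥L) := by
    refine hb (ModuleCat.of R ↥L) ?_ ?_
    · -- torsionGamma b L = ⊤
      rw [eq_top_iff]
      rintro ⟨m, hm⟩ -
      have hmM : m ∈ torsionGamma a M := by rw [hGam]; trivial
      obtain ⟨n, hn⟩ := mem_torsionGamma_iff.mp hmM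
      refine mem_torsionGamma_iff.mpr ⟨n, fun r hr => ?_⟩
      have h0 : r • m = 0 := hn r (Ideal.pow_right_mono le_sup_right n hr)
      refine Subtype.ext ?_
      show r • m = 0
      exact h0
    · -- S of torsionBySet L b, iso to torsionBySet M a
      refine hiso (M := ModuleCat.of R ↥(Submodule.torsionBySet R M (a : Set R))) ?_ hS
      exact (Submodule.comapSubtypeEquivOfLe hle).symm.trans
        (LinearEquiv.ofEq _ _ heq.symm)
  refine hx M ?_ hSL
  rw [eq_top_iff]
  rintro m -
  exact torsionGamma_antitone le_sup_left M (by rw [hGam]; trivial)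

/-- If a class `S` satisfies the `C_{(x)}` condition for every principal ideal `(x)`,
then `S` satisfies the `C_a` condition for every ideal `a`. -/
theorem stmt4 [IsNoetherianRing R]
    (S : ModuleCat.{u} R → Prop)
    (hiso : IsoClosed S)
    (h : ∀ x : R, CCond S (Ideal.span {x})) :
    ∀ a : Ideal R, CCond S a := by
  have key : ∀ s : Finset R, CCond S (Ideal.span (↑s : Set R)) := by
    intro s
    classical
    induction s using Finset.induction_on with
    | empty =>
      have : (Ideal.span (↑(∅ : Finset R) : Set R)) = Ideal.span {(0 : R)} := by
        rw [Finset.coe_empty, Ideal.span_empty]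
        exact (Ideal.span_singleton_eq_bot.mpr rfl).symm
      rw [this]
      exact h 0
    | @insert x s _ ih =>
      have : (Ideal.span (↑(insert x s) : Set R))
          = Ideal.span {x} ⊔ Ideal.span (↑s : Set R) := by
        rw [Finset.coe_insert, Ideal.span_insert]
      rw [this]
      exact ccond_sup_step S hiso (h x) ih
  intro a
  obtain ⟨s, hs⟩ := (isNoetherianRing_iff_ideal_fg R).mp ‹_› a
  rw [← hs]
  exact key s
end

section
/- Let R be a commutative noetherian ring, let 𝔞 be an ideal of R, and let 𝒮 be a Serre subcategory of R-modules. Then the class 𝒮_𝔞 = {M : Γ_𝔞(M) = M and (0 :_M 𝔞) ∈ 𝒮 imply M ∈ 𝒮} is closed under extensions: if M is an R-module with a submodule N such that N ∈ 𝒮_𝔞 and M/N ∈ 𝒮_𝔞, then M ∈ 𝒮_𝔞. -/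
universe u

open Submodule

variable {R : Type u} [CommRing R]

lemma subS {S : ModuleCat.{u} R → Prop} (hS : ∀ ⦃M N : ModuleCat.{u} R⦄, (M ≃ₗ[R] N) → S M → S N)
    (hsub : ∀ (M : ModuleCat.{u} R) (N : Submodule R M), S M → S (ModuleCat.of R N))
    {A B : Type u} [AddCommGroup A] [Module R A] [AddCommGroup B] [Module R B]
    (f : A →ₗ[R] B) (hf : Function.Injective f) (hB : S (ModuleCat.of R B)) :
    S (ModuleCat.of R A) := by
  have h1 : S (ModuleCat.of R (LinearMap.range f)) :=
    hsub (ModuleCat.of R B) (LinearMap.range f) hB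
  exact hS (M := ModuleCat.of R (LinearMap.range f)) (N := ModuleCat.of R A)
    (LinearEquiv.ofInjective f hf).symm h1

lemma quotS {S : ModuleCat.{u} R → Prop} (hS : ∀ ⦃M N : ModuleCat.{u} R⦄, (M ≃ₗ[R] N) → S M → S N)
    (hquot : ∀ (M : ModuleCat.{u} R) (N : Submodule R M), S M → S (ModuleCat.of R (M ⧸ N)))
    {A B : Type u} [AddCommGroup A] [Module R A] [AddCommGroup B] [Module R B]
    (f : A →ₗ[R] B) (hf : Function.Surjective f) (hA : S (ModuleCat.of R A)) :
    S (ModuleCat.of R B) := by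
  have h1 : S (ModuleCat.of R (A ⧸ LinearMap.ker f)) :=
    hquot (ModuleCat.of R A) (LinearMap.ker f) hA
  exact hS (f.quotKerEquivOfSurjective hf) h1


lemma piS {S : ModuleCat.{u} R → Prop} (hiso : ∀ ⦃M N : ModuleCat.{u} R⦄, (M ≃ₗ[R] N) → S M → S N)
    (hzero : ∀ M : ModuleCat.{u} R, Subsingleton M → S M)
    (hsub : ∀ (M : ModuleCat.{u} R) (N : Submodule R M), S M → S (ModuleCat.of R N))
    (hext : ∀ (M : ModuleCat.{u} R) (N : Submodule R M),
      S (ModuleCat.of R N) → S (ModuleCat.of R (M ⧸ N)) → S M)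
    {A : Type u} [AddCommGroup A] [Module R A] (hA : S (ModuleCat.of R A)) :
    ∀ n : ℕ, S (ModuleCat.of R (Fin n → A))
  | 0 => hzero _ ⟨fun f g => funext fun i => i.elim0⟩
  | (n+1) => by
    set f : (Fin (n+1) → A) →ₗ[R] A := LinearMap.proj 0 with hf
    have hsurj : Function.Surjective f := fun x => ⟨fun _ => x, rfl⟩
    have hker : S (ModuleCat.of R (LinearMap.ker f)) := by
      refine subS hiso hsub ((LinearMap.funLeft R A Fin.succ).comp (LinearMap.ker f).subtype)
        ?_ (piS hiso hzero hsub hext hA n)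
      rintro ⟨x, hx⟩ ⟨y, hy⟩ h
      simp only [LinearMap.coe_comp, Function.comp_apply, Submodule.coe_subtype,
        LinearMap.funLeft_apply] at h
      have hx0 : x 0 = 0 := hx
      have hy0 : y 0 = 0 := hy
      ext i
      refine Fin.cases ?_ ?_ i
      · show x 0 = y 0; rw [hx0, hy0]
      · exact fun j => show x j.succ = y j.succ from congrFun h j
    have hq : S (ModuleCat.of R ((Fin (n+1) → A) ⧸ LinearMap.ker f)) :=
      hiso (f.quotKerEquivOfSurjective hsurj).symm hA
    exact hext (ModuleCat.of R (Fin (n+1) → A)) (LinearMap.ker f) hker hq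

lemma mem_torsionGamma {a : Ideal R} {M : Type u} [AddCommGroup M] [Module R M] {x : M} :
    x ∈ torsionGamma a M ↔ ∃ n : ℕ, ∀ r ∈ a ^ n, r • x = 0 := by
  have hdir : Directed (· ≤ ·) fun n : ℕ => torsionBySet R M ((a ^ n : Ideal R) : Set R) := by
    intro m n
    refine ⟨m + n, ?_, ?_⟩ <;>
      exact torsionBySet_le_torsionBySet_of_subset
        (fun r hr => Ideal.pow_le_pow_right (by omega) hr)
  rw [torsionGamma, Submodule.mem_iSup_of_directed _ hdir]
  constructor
  · rintro ⟨n, hn⟩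
    exact ⟨n, fun r hr => (mem_torsionBySet_iff _ _).mp hn ⟨r, hr⟩⟩
  · rintro ⟨n, hn⟩
    exact ⟨n, (mem_torsionBySet_iff _ _).mpr fun r => hn r r.2⟩

/-- For a Serre subcategory `S` and an ideal `a`, the class
`S_a = {M : S satisfies C_a on M}` is closed under extensions. -/
theorem stmt14 [IsNoetherianRing R] (a : Ideal R)
    (S : ModuleCat.{u} R → Prop)
    (hS : IsSerreClass S)
    (M : ModuleCat.{u} R) (N : Submodule R M)
    (hN : CCondOn S a (ModuleCat.of R N))
    (hQ : CCondOn S a (ModuleCat.of R (M ⧸ N))) :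
    CCondOn S a M := by
  classical
  intro hTor hAnn
  obtain ⟨s, hs⟩ : a.FG := IsNoetherian.noetherian a
  have htor : ∀ x : M, ∃ n : ℕ, ∀ r ∈ a ^ n, r • x = 0 := fun x =>
    mem_torsionGamma.mp (hTor ▸ Submodule.mem_top)
  -- Step A : N ∈ S
  have hNS : S (ModuleCat.of R N) := by
    apply hN
    · show torsionGamma a N = ⊤
      rw [eq_top_iff]
      intro x _
      obtain ⟨n, hn⟩ := htor (x : M)
      exact mem_torsionGamma.mpr ⟨n, fun r hr => Subtype.ext (by simpa only [Submodule.coe_smul, ZeroMemClass.coe_zero] using hn r hr)⟩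
    · refine subS hS.iso hS.subobj
        (LinearMap.codRestrict (torsionBySet R M (a : Set R))
          (N.subtype ∘ₗ (torsionBySet R (N : Type u) (a : Set R)).subtype) ?_) ?_ hAnn
      · intro c
        refine (mem_torsionBySet_iff _ _).mpr fun r => ?_
        have h1 := (mem_torsionBySet_iff _ _).mp c.2 r
        simpa only [LinearMap.comp_apply, Submodule.coe_subtype, Submodule.subtype_apply, map_smul,
          map_zero] using congrArg (N.subtype) h1
      · intro x y h
        have := congrArg Subtype.val h
        simp only [LinearMap.codRestrict_apply, LinearMap.coe_comp, Function.comp_apply,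
          Submodule.coe_subtype] at this
        exact Subtype.ext (Subtype.ext this)
  -- the submodule L = { m : M | a • m ⊆ N }
  set L : Submodule R M := Submodule.comap N.mkQ (torsionBySet R (M ⧸ N) (a : Set R)) with hL
  have hLsmul : ∀ (m : L) (r : R), r ∈ a → r • (m : M) ∈ N := by
    intro m r hr
    have h1 : N.mkQ (m : M) ∈ torsionBySet R (M ⧸ N) (a : Set R) := m.2
    have h2 := (mem_torsionBySet_iff _ _).mp h1 ⟨r, hr⟩
    rw [← map_smul, Submodule.mkQ_apply, Submodule.Quotient.mk_eq_zero] at h2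
    exact h2
  have hes : ∀ i : Fin s.card, ((s.equivFin.symm i : R)) ∈ a := fun i =>
    hs ▸ Submodule.subset_span (s.equivFin.symm i).2
  set ψ : L →ₗ[R] (Fin s.card → N) :=
    { toFun := fun m i => ⟨(s.equivFin.symm i : R) • (m : M), hLsmul m _ (hes i)⟩
      map_add' := by intro x y; funext i; apply Subtype.ext; simp [smul_add]
      map_smul' := by
        intro r x; funext i; apply Subtype.ext
        simpa using smul_comm (s.equivFin.symm i : R) r (x : M) } with hψ
  -- ker ψ lands in (0 :_M a)
  have hkermem : ∀ x : LinearMap.ker ψ, ((x : L) : M) ∈ torsionBySet R M (a : Set R) := by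
    intro x
    have hx : ψ (x : L) = 0 := x.2
    rw [show (a : Set R) = ((Ideal.span (s : Set R) : Ideal R) : Set R) by rw [hs],
      ← torsionBySet_eq_torsionBySet_span]
    refine (mem_torsionBySet_iff _ _).mpr ?_
    rintro ⟨r, hr⟩
    have h1 := congrFun hx (s.equivFin ⟨r, hr⟩)
    have h2 := congrArg Subtype.val h1
    simp only [hψ, LinearMap.coe_mk, AddHom.coe_mk, Pi.zero_apply,
      ZeroMemClass.coe_zero, Equiv.symm_apply_apply] at h2
    exact h2
  have hkerS : S (ModuleCat.of R (LinearMap.ker ψ)) := by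
    refine subS hS.iso hS.subobj
      (LinearMap.codRestrict (torsionBySet R M (a : Set R))
        (L.subtype ∘ₗ (LinearMap.ker ψ).subtype) hkermem) ?_ hAnn
    intro x y h
    have := congrArg Subtype.val h
    exact Subtype.ext (Subtype.ext this)
  have hquotS : S (ModuleCat.of R (L ⧸ LinearMap.ker ψ)) := by
    have hpi : S (ModuleCat.of R (Fin s.card → N)) :=
      piS hS.iso hS.zero hS.subobj hS.extension hNS s.card
    have hrange : S (ModuleCat.of R (LinearMap.range ψ)) :=
      hS.subobj (ModuleCat.of R (Fin s.card → N)) (LinearMap.range ψ) hpi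
    exact hS.iso (M := ModuleCat.of R (LinearMap.range ψ))
      (N := ModuleCat.of R (L ⧸ LinearMap.ker ψ)) ψ.quotKerEquivRange.symm hrange
  have hLS : S (ModuleCat.of R L) :=
    hS.extension (ModuleCat.of R L) (LinearMap.ker ψ) hkerS hquotS
  -- Step C : M ⧸ N ∈ S
  have hQS : S (ModuleCat.of R (M ⧸ N)) := by
    apply hQ
    · show torsionGamma a (M ⧸ N) = ⊤
      rw [eq_top_iff]
      intro x _
      obtain ⟨m, rfl⟩ := N.mkQ_surjective x
      obtain ⟨n, hn⟩ := htor m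
      refine mem_torsionGamma.mpr ⟨n, fun r hr => ?_⟩
      rw [← map_smul, hn r hr, map_zero]
    · refine quotS hS.iso hS.quot
        (LinearMap.codRestrict (torsionBySet R (M ⧸ N) (a : Set R))
          (N.mkQ ∘ₗ L.subtype) (fun x => x.2)) ?_ hLS
      rintro ⟨q, hq⟩
      obtain ⟨m, hm⟩ := N.mkQ_surjective q
      refine ⟨⟨m, ?_⟩, Subtype.ext ?_⟩
      · show N.mkQ m ∈ torsionBySet R (M ⧸ N) (a : Set R)
        rw [hm]; exact hq
      · exact hm
  exact hS.extension M N hNS hQS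
end
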